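/- arXiv:1705.06598 — 3 statements merged into one kernel-verified Lean document; each statement's English description precedes it below -/
import Mathlib

section
/- Fix Δ > 0, real constants c_k^l (1 ≤ k ≤ d, 1 ≤ l ≤ m) not all zero, and distinct positive reals λ₁,…,λ_d with Δλ_k and Δ(λ_j ± λ_k) (j ≠ k) not multiples of 2π. Define σ_{nr}² = Σ_{l=1}^m ∫_{t₀+(r−1)Δ}^{t₀+rΔ} (Σ_{k=1}^d c_k^l sin(λ_k(t_n − s)))² ds with t_n = t₀ + nΔ, and s_n² = Σ_{r=1}^n σ_{nr}². Then s_n² = (Δ/2) Σ_{l,k} (c_k^l)² · n + C_n with C_n uniformly bounded in n; in particular lim_{n→∞} s_n²/n = (Δ/2) Σ_{l=1}^m Σ_{k=1}^d (c_k^l)² > 0. -/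
open intervalIntegral Filter


noncomputable def Ifun (μ T : ℝ) : ℝ := if μ = 0 then T else Real.sin (μ * T) / μ

lemma integral_cos_mul (μ T : ℝ) :
    ∫ u in (0:ℝ)..T, Real.cos (μ * u) = Ifun μ T := by
  unfold Ifun
  rcases eq_or_ne μ 0 with h | h
  · simp [h]
  · rw [if_neg h]
    have hd : ∀ u : ℝ, HasDerivAt (fun x => Real.sin (μ * x) / μ) (Real.cos (μ * u)) u := by
      intro u
      have h1 : HasDerivAt (fun x => Real.sin (μ * x)) (Real.cos (μ * u) * μ) u := by
        have := (Real.hasDerivAt_sin (μ * u)).comp u ((hasDerivAt_id u).const_mul μ)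
        simpa [mul_comm, Function.comp_def] using this
      have := h1.div_const μ
      simpa [mul_div_assoc, mul_div_cancel_right₀ _ h] using this
    rw [intervalIntegral.integral_eq_sub_of_hasDerivAt (fun u _ => hd u)
      ((Real.continuous_cos.comp (continuous_const.mul continuous_id)).intervalIntegrable 0 T)]
    simp

lemma Ifun_bound {μ : ℝ} (h : μ ≠ 0) (T : ℝ) : |Ifun μ T| ≤ 1 / |μ| := by
  unfold Ifun
  rw [if_neg h, abs_div]
  gcongr
  exact Real.abs_sin_le_one _

lemma integral_sin_mul_sin (a b T : ℝ) :
    ∫ u in (0:ℝ)..T, Real.sin (a * u) * Real.sin (b * u)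
      = (Ifun (a - b) T - Ifun (a + b) T) / 2 := by
  have hpt : ∀ u : ℝ, Real.sin (a*u) * Real.sin (b*u)
      = (Real.cos ((a-b)*u) - Real.cos ((a+b)*u)) / 2 := by
    intro u
    rw [sub_mul, add_mul, Real.cos_sub, Real.cos_add]
    ring
  have hi : ∀ μ : ℝ, IntervalIntegrable (fun u => Real.cos (μ * u)) MeasureTheory.volume 0 T :=
    fun μ => (Real.continuous_cos.comp (continuous_const.mul continuous_id)).intervalIntegrable 0 T
  calc ∫ u in (0:ℝ)..T, Real.sin (a*u) * Real.sin (b*u)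
      = ∫ u in (0:ℝ)..T, (Real.cos ((a-b)*u) - Real.cos ((a+b)*u)) / 2 := by
        simp_rw [hpt]
    _ = ((∫ u in (0:ℝ)..T, Real.cos ((a-b)*u)) - ∫ u in (0:ℝ)..T, Real.cos ((a+b)*u)) / 2 := by
        rw [intervalIntegral.integral_div, intervalIntegral.integral_sub (hi _) (hi _)]
    _ = _ := by rw [integral_cos_mul, integral_cos_mul]

lemma sum_integral_adjacent (F : ℝ → ℝ) (hF : Continuous F) (t₀ Δ : ℝ) (n : ℕ) :
    ∑ r ∈ Finset.Icc 1 n, (∫ s in (t₀ + ((r:ℝ)-1)*Δ)..(t₀ + r*Δ), F s)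
      = ∫ s in t₀..(t₀ + n*Δ), F s := by
  induction n with
  | zero => simp
  | succ n ih =>
    rw [Finset.sum_Icc_succ_top (by omega), ih]
    have h1 : t₀ + (((n+1:ℕ):ℝ) - 1)*Δ = t₀ + n*Δ := by push_cast; ring
    have h2 : t₀ + ((n+1:ℕ):ℝ)*Δ = t₀ + (n+1:ℝ)*Δ := by push_cast; ring
    rw [h1, h2, intervalIntegral.integral_add_adjacent_intervals
      (hF.intervalIntegrable _ _) (hF.intervalIntegrable _ _)]

lemma integral_sq_sum {d : ℕ} (a lam : Fin d → ℝ) (T : ℝ) :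
    ∫ u in (0:ℝ)..T, (∑ k, a k * Real.sin (lam k * u))^2
      = ∑ j, ∑ k, a j * a k * ((Ifun (lam j - lam k) T - Ifun (lam j + lam k) T) / 2) := by
  have hexp : ∀ u : ℝ, (∑ k, a k * Real.sin (lam k * u))^2
      = ∑ j, ∑ k, a j * a k * (Real.sin (lam j * u) * Real.sin (lam k * u)) := by
    intro u
    rw [sq, Finset.sum_mul_sum]
    exact Finset.sum_congr rfl fun j _ => Finset.sum_congr rfl fun k _ => by ring
  have hcont : ∀ (j k : Fin d), Continuous fun u : ℝ =>
      a j * a k * (Real.sin (lam j * u) * Real.sin (lam k * u)) := by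
    intro j k
    continuity
  simp_rw [hexp]
  rw [intervalIntegral.integral_finset_sum]
  · refine Finset.sum_congr rfl fun j _ => ?_
    rw [intervalIntegral.integral_finset_sum]
    · refine Finset.sum_congr rfl fun k _ => ?_
      rw [intervalIntegral.integral_const_mul, integral_sin_mul_sin]
    · exact fun k _ => (hcont j k).intervalIntegrable 0 T
  · intro j _
    exact (continuous_finset_sum _ fun k _ => hcont j k).intervalIntegrable 0 T

lemma sum_sigma_eq {d : ℕ} (a lam : Fin d → ℝ) (Δ t₀ : ℝ) (n : ℕ) :
    ∑ r ∈ Finset.Icc 1 n, (∫ s in (t₀ + ((r:ℝ)-1)*Δ)..(t₀ + r*Δ),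
        (∑ k, a k * Real.sin (lam k * ((t₀ + n*Δ) - s)))^2)
      = ∑ j, ∑ k, a j * a k *
          ((Ifun (lam j - lam k) ((n:ℝ)*Δ) - Ifun (lam j + lam k) ((n:ℝ)*Δ)) / 2) := by
  set g : ℝ → ℝ := fun u => (∑ k, a k * Real.sin (lam k * u))^2 with hg
  have hgcont : Continuous g := by
    apply Continuous.pow
    exact continuous_finset_sum _ fun k _ =>
      continuous_const.mul (Real.continuous_sin.comp (continuous_const.mul continuous_id))
  have hFc : Continuous fun s => g ((t₀ + n*Δ) - s) :=
    hgcont.comp (continuous_const.sub continuous_id)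
  have step1 := sum_integral_adjacent (fun s => g ((t₀ + (n:ℝ)*Δ) - s)) hFc t₀ Δ n
  rw [show (∑ r ∈ Finset.Icc 1 n, (∫ s in (t₀ + ((r:ℝ)-1)*Δ)..(t₀ + r*Δ),
        (∑ k, a k * Real.sin (lam k * ((t₀ + n*Δ) - s)))^2))
      = ∑ r ∈ Finset.Icc 1 n, (∫ s in (t₀ + ((r:ℝ)-1)*Δ)..(t₀ + r*Δ),
        g ((t₀ + (n:ℝ)*Δ) - s)) from rfl, step1]
  have step2 := intervalIntegral.integral_comp_sub_left (a := t₀) (b := t₀ + (n:ℝ)*Δ)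
    g (t₀ + (n:ℝ)*Δ)
  rw [step2, sub_self, add_sub_cancel_left, integral_sq_sum]

/-- Asymptotics of the variance `s_n²` of the weighted sums of stochastic integrals of
trigonometric integrands over consecutive intervals of length `Δ`:
`s_n² = (Δ/2) Σ_{l,k} (c_k^l)² · n + C_n` with `C_n` uniformly bounded, hence
`s_n²/n → (Δ/2) Σ_{l,k} (c_k^l)² > 0`. -/
theorem variance_growth_continuous {d m : ℕ}
    (Δ t₀ : ℝ) (hΔ : 0 < Δ) (ht₀ : 0 ≤ t₀)
    (c : Fin m → Fin d → ℝ) (hc : ∃ l k, c l k ≠ 0)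
    (lam : Fin d → ℝ) (hpos : ∀ k, 0 < lam k) (hinj : Function.Injective lam)
    (h1 : ∀ k, ¬ ∃ z : ℤ, Δ * lam k = 2 * Real.pi * z)
    (h2 : ∀ j k, j ≠ k → ¬ ∃ z : ℤ, Δ * (lam j + lam k) = 2 * Real.pi * z)
    (h3 : ∀ j k, j ≠ k → ¬ ∃ z : ℤ, Δ * (lam j - lam k) = 2 * Real.pi * z)
    (σ2 : ℕ → ℕ → ℝ)
    (hσ2 : ∀ n r, σ2 n r = ∑ l, ∫ s in (t₀ + ((r : ℝ) - 1) * Δ)..(t₀ + r * Δ),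
        (∑ k, c l k * Real.sin (lam k * ((t₀ + n * Δ) - s))) ^ 2)
    (s2 : ℕ → ℝ) (hs2 : ∀ n, s2 n = ∑ r ∈ Finset.Icc 1 n, σ2 n r) :
    (∃ C : ℝ, ∀ n : ℕ, |s2 n - (Δ / 2) * (∑ l, ∑ k, (c l k) ^ 2) * n| ≤ C)
    ∧ Filter.Tendsto (fun n : ℕ => s2 n / n) Filter.atTop
        (nhds ((Δ / 2) * ∑ l, ∑ k, (c l k) ^ 2))
    ∧ 0 < (Δ / 2) * ∑ l, ∑ k, (c l k) ^ 2 := by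
  set L : ℝ := (Δ / 2) * ∑ l, ∑ k, (c l k) ^ 2 with hL
  set R : ℕ → ℝ := fun n => ∑ l, ∑ j, ∑ k, c l j * c l k *
      (((if j = k then 0 else Ifun (lam j - lam k) ((n:ℝ)*Δ))
        - Ifun (lam j + lam k) ((n:ℝ)*Δ)) / 2) with hR
  set C : ℝ := ∑ l : Fin m, ∑ j : Fin d, ∑ k : Fin d, |c l j * c l k| *
      (((if j = k then 0 else 1/|lam j - lam k|) + 1/(lam j + lam k)) / 2) with hC
  -- closed form for s2
  have key : ∀ n : ℕ, s2 n = ∑ l, ∑ j, ∑ k, c l j * c l k *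
      ((Ifun (lam j - lam k) ((n:ℝ)*Δ) - Ifun (lam j + lam k) ((n:ℝ)*Δ)) / 2) := by
    intro n
    rw [hs2]
    simp_rw [hσ2]
    rw [Finset.sum_comm]
    exact Finset.sum_congr rfl fun l _ => sum_sigma_eq (c l) lam Δ t₀ n
  -- split into linear part plus bounded part
  have key2 : ∀ n : ℕ, s2 n = L * n + R n := by
    intro n
    rw [key n]
    have e1 : ∀ (l : Fin m) (j k : Fin d), c l j * c l k *
        ((Ifun (lam j - lam k) ((n:ℝ)*Δ) - Ifun (lam j + lam k) ((n:ℝ)*Δ)) / 2)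
        = (if j = k then (c l j)^2 * ((n:ℝ)*Δ/2) else 0)
          + c l j * c l k * (((if j = k then 0 else Ifun (lam j - lam k) ((n:ℝ)*Δ))
            - Ifun (lam j + lam k) ((n:ℝ)*Δ)) / 2) := by
      intro l j k
      by_cases h : j = k
      · subst h
        simp only [eq_self_iff_true, if_true]
        have hI : Ifun (lam j - lam j) ((n:ℝ)*Δ) = (n:ℝ)*Δ := by simp [Ifun]
        rw [hI]; ring
      · simp only [if_neg h]; ring
    simp_rw [e1, Finset.sum_add_distrib]
    congr 1
    simp only [Finset.sum_ite_eq, Finset.mem_univ, if_true]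
    simp_rw [← Finset.sum_mul]
    rw [hL]; push_cast; ring
  -- uniform bound on R
  have hRb : ∀ n : ℕ, |R n| ≤ C := by
    intro n
    rw [hR, hC]
    refine (Finset.abs_sum_le_sum_abs _ _).trans (Finset.sum_le_sum fun l _ => ?_)
    refine (Finset.abs_sum_le_sum_abs _ _).trans (Finset.sum_le_sum fun j _ => ?_)
    refine (Finset.abs_sum_le_sum_abs _ _).trans (Finset.sum_le_sum fun k _ => ?_)
    have hA : |if j = k then (0:ℝ) else Ifun (lam j - lam k) ((n:ℝ)*Δ)|
        ≤ (if j = k then 0 else 1/|lam j - lam k|) := by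
      split_ifs with h
      · simp
      · exact Ifun_bound (sub_ne_zero.mpr fun he => h (hinj he)) _
    have hBpos : 0 < lam j + lam k := add_pos (hpos j) (hpos k)
    have hB : |Ifun (lam j + lam k) ((n:ℝ)*Δ)| ≤ 1/(lam j + lam k) := by
      have := Ifun_bound hBpos.ne' ((n:ℝ)*Δ)
      rwa [abs_of_pos hBpos] at this
    have hX : |(if j = k then (0:ℝ) else Ifun (lam j - lam k) ((n:ℝ)*Δ))
          - Ifun (lam j + lam k) ((n:ℝ)*Δ)|
        ≤ (if j = k then 0 else 1/|lam j - lam k|) + 1/(lam j + lam k) :=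
      le_trans (abs_sub _ _) (add_le_add hA hB)
    rw [abs_mul, abs_div, abs_two]
    exact mul_le_mul_of_nonneg_left (by linarith) (abs_nonneg _)
  refine ⟨⟨C, fun n => ?_⟩, ?_, ?_⟩
  · rw [key2 n]
    simpa using hRb n
  · -- tendsto
    have hz : Filter.Tendsto (fun n : ℕ => R n / n) Filter.atTop (nhds 0) := by
      refine squeeze_zero_norm (fun n => ?_) (tendsto_const_div_atTop_nhds_zero_nat C)
      rcases Nat.eq_zero_or_pos n with hn | hn
      · subst hn; simp
      · have hn' : (0:ℝ) < n := by exact_mod_cast hn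
        rw [Real.norm_eq_abs, abs_div, abs_of_pos hn']
        gcongr
        exact hRb n
    have heq : ∀ᶠ n : ℕ in Filter.atTop, L + R n / n = s2 n / n := by
      filter_upwards [Filter.eventually_gt_atTop 0] with n hn
      have hn' : ((n:ℝ)) ≠ 0 := Nat.cast_ne_zero.mpr hn.ne'
      rw [key2 n]
      field_simp
    have := (tendsto_const_nhds.add hz).congr' heq
    simpa using this
  · obtain ⟨l0, k0, h0⟩ := hc
    have hsum : 0 < ∑ l, ∑ k, (c l k)^2 := by
      refine Finset.sum_pos' (fun l _ => Finset.sum_nonneg fun k _ => sq_nonneg _)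
        ⟨l0, Finset.mem_univ _, ?_⟩
      exact Finset.sum_pos' (fun k _ => sq_nonneg _)
        ⟨k0, Finset.mem_univ _, by positivity⟩
    exact mul_pos (by linarith) hsum
end

section
/- Fix h > 0 and distinct positive λ₁,…,λ_d with h < π/max_k λ_k, and reals c_j > 0, α_j. Define σ_{nr}² = h(Σ_{j=1}^d c_j cos(rλ_j h − α_j))² and s_n² = Σ_{r=0}^n σ_{nr}². Then s_n² = n·(h/2)Σ_{k=1}^d c_k² + C_n with C_n uniformly bounded, and hence lim_{n→∞} s_n²/n = (h/2)Σ_{k=1}^d c_k² > 0. -/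
open Filter

lemma abs_sum_cos_le (θ φ : ℝ) (hθ : Real.sin (θ / 2) ≠ 0) (n : ℕ) :
    |∑ r ∈ Finset.range n, Real.cos (r * θ + φ)| ≤ 1 / |Real.sin (θ / 2)| := by
  set f : ℕ → ℝ := fun r => Real.sin (r * θ + (φ - θ / 2)) with hf
  have key : ∀ r : ℕ, f (r + 1) - f r = 2 * Real.sin (θ / 2) * Real.cos (r * θ + φ) := by
    intro r
    have : ((r + 1 : ℕ) : ℝ) = (r : ℝ) + 1 := by push_cast; ring
    simp only [hf, this, Real.sin_sub_sin]
    have e1 : (((r : ℝ) + 1) * θ + (φ - θ / 2) - ((r : ℝ) * θ + (φ - θ / 2))) / 2 = θ / 2 := by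
      ring
    have e2 : (((r : ℝ) + 1) * θ + (φ - θ / 2) + ((r : ℝ) * θ + (φ - θ / 2))) / 2
        = (r : ℝ) * θ + φ := by ring
    rw [e1, e2]
  have tele : ∑ r ∈ Finset.range n, (f (r + 1) - f r) = f n - f 0 :=
    Finset.sum_range_sub f n
  have hsum : 2 * Real.sin (θ / 2) * ∑ r ∈ Finset.range n, Real.cos (r * θ + φ)
      = f n - f 0 := by
    rw [← tele, Finset.mul_sum]
    exact Finset.sum_congr rfl fun r _ => (key r).symm
  have hb : |f n - f 0| ≤ 2 := by
    calc |f n - f 0| ≤ |f n| + |f 0| := abs_sub _ _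
      _ ≤ 1 + 1 := add_le_add (Real.abs_sin_le_one _) (Real.abs_sin_le_one _)
      _ = 2 := by norm_num
  have habs : (0:ℝ) < |Real.sin (θ / 2)| := abs_pos.mpr hθ
  have h2 : 2 * |Real.sin (θ / 2)| * |∑ r ∈ Finset.range n, Real.cos (r * θ + φ)| ≤ 2 := by
    calc 2 * |Real.sin (θ / 2)| * |∑ r ∈ Finset.range n, Real.cos (r * θ + φ)|
        = |2 * Real.sin (θ / 2) * ∑ r ∈ Finset.range n, Real.cos (r * θ + φ)| := by
          rw [abs_mul, abs_mul, abs_two]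
      _ = |f n - f 0| := by rw [hsum]
      _ ≤ 2 := hb
  rw [le_div_iff₀ habs]
  nlinarith [abs_nonneg (∑ r ∈ Finset.range n, Real.cos (r * θ + φ))]

lemma sin_ne_zero_of_abs_lt (x : ℝ) (hx0 : x ≠ 0) (hx : |x| < Real.pi) : Real.sin x ≠ 0 := by
  rcases hx0.lt_or_gt with hneg | hposx
  · have hlt : -x < Real.pi := by rw [abs_of_neg hneg] at hx; linarith
    have : 0 < Real.sin (-x) := Real.sin_pos_of_pos_of_lt_pi (by linarith) hlt
    rw [Real.sin_neg] at this; linarith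
  · exact ne_of_gt (Real.sin_pos_of_pos_of_lt_pi hposx (by rwa [abs_of_pos hposx] at hx))

/-- Asymptotics of the discrete variance `s_n² = Σ_{r=0}^n h(Σ_j c_j cos(rλ_j h − α_j))²`:
for stepsize `h < π / max_k λ_k` one has `s_n² = n(h/2)Σ c_k² + C_n` with `C_n` uniformly
bounded, hence `s_n²/n → (h/2)Σ c_k² > 0`. -/
theorem discrete_variance_growth {d : ℕ} [NeZero d]
    (lam : Fin d → ℝ) (hpos : ∀ k, 0 < lam k) (hinj : Function.Injective lam)
    (h : ℝ) (hh0 : 0 < h)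
    (hh : h < Real.pi / Finset.univ.sup' Finset.univ_nonempty lam)
    (c : Fin d → ℝ) (hc : ∀ j, 0 < c j) (α : Fin d → ℝ)
    (σ2 : ℕ → ℝ)
    (hσ2 : ∀ r : ℕ, σ2 r = h * (∑ j, c j * Real.cos ((r : ℝ) * lam j * h - α j)) ^ 2)
    (s2 : ℕ → ℝ) (hs2 : ∀ n, s2 n = ∑ r ∈ Finset.range (n + 1), σ2 r) :
    (∃ C : ℝ, ∀ n : ℕ, |s2 n - (n : ℝ) * (h / 2) * ∑ k, (c k) ^ 2| ≤ C)
    ∧ Filter.Tendsto (fun n : ℕ => s2 n / n) Filter.atTop (nhds ((h / 2) * ∑ k, (c k) ^ 2))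
    ∧ 0 < (h / 2) * ∑ k, (c k) ^ 2 := by
  set K : ℝ := (h / 2) * ∑ k, (c k) ^ 2 with hK
  -- positivity
  have hKpos : 0 < K := by
    apply mul_pos (by positivity)
    exact Finset.sum_pos (fun k _ => pow_pos (hc k) 2) Finset.univ_nonempty
  -- max facts
  set M : ℝ := Finset.univ.sup' Finset.univ_nonempty lam with hMdef
  have hMmem : ∀ k, lam k ≤ M := fun k => Finset.le_sup' lam (Finset.mem_univ k)
  have hMpos : 0 < M := lt_of_lt_of_le (hpos (Classical.arbitrary (Fin d))) (hMmem _)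
  have hhM : h * M < Real.pi := by
    rw [lt_div_iff₀ hMpos] at hh; exact hh
  have hlh : ∀ k, lam k * h < Real.pi := fun k => by
    have := mul_le_mul_of_nonneg_right (hMmem k) hh0.le
    nlinarith
  have hlh0 : ∀ k, 0 < lam k * h := fun k => mul_pos (hpos k) hh0
  -- sine nonvanishing
  have hsin_sum : ∀ j k : Fin d, Real.sin ((lam j + lam k) * h / 2) ≠ 0 := by
    intro j k
    apply ne_of_gt
    apply Real.sin_pos_of_pos_of_lt_pi
    · have := hlh0 j; have := hlh0 k; nlinarith
    · have := hlh j; have := hlh k; nlinarith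
  have hsin_diff : ∀ j k : Fin d, j ≠ k → Real.sin ((lam j - lam k) * h / 2) ≠ 0 := by
    intro j k hjk
    apply sin_ne_zero_of_abs_lt
    · have : lam j ≠ lam k := fun e => hjk (hinj e)
      intro e
      apply this
      have : (lam j - lam k) * h = 0 := by linarith
      rcases mul_eq_zero.mp this with h1 | h2
      · linarith
      · exact absurd h2 (ne_of_gt hh0)
    · rcases abs_cases ((lam j - lam k) * h / 2) with ⟨e, _⟩ | ⟨e, _⟩ <;>
        (rw [e]; have := hlh j; have := hlh k; have := hlh0 j; have := hlh0 k; nlinarith)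
  -- the oscillating part
  set W : Fin d → Fin d → ℕ → ℝ := fun j k r =>
    Real.cos ((r : ℝ) * ((lam j + lam k) * h) + (-(α j + α k))) / 2 +
    (if j = k then 0 else Real.cos ((r : ℝ) * ((lam j - lam k) * h) + (-(α j - α k))) / 2)
    with hW
  -- expansion of σ2
  have term : ∀ (j k : Fin d) (r : ℕ),
      (c j * Real.cos ((r : ℝ) * lam j * h - α j)) * (c k * Real.cos ((r : ℝ) * lam k * h - α k))
        = c j * c k * W j k r + (if j = k then (c j) ^ 2 / 2 else 0) := by
    intro j k r
    by_cases hjk : j = k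
    · subst hjk
      simp only [hW, eq_self_iff_true, if_true, add_zero]
      have harg : (r : ℝ) * ((lam j + lam j) * h) + (-(α j + α j))
          = 2 * ((r : ℝ) * lam j * h - α j) := by ring
      rw [harg]
      have hcs := Real.cos_sq ((r : ℝ) * lam j * h - α j)
      linear_combination (c j * c j) * hcs
    · simp only [hW, if_neg hjk, add_zero]
      have harg1 : (r : ℝ) * ((lam j + lam k) * h) + (-(α j + α k))
          = ((r : ℝ) * lam j * h - α j) + ((r : ℝ) * lam k * h - α k) := by ring
      have harg2 : (r : ℝ) * ((lam j - lam k) * h) + (-(α j - α k))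
          = ((r : ℝ) * lam j * h - α j) - ((r : ℝ) * lam k * h - α k) := by ring
      rw [harg1, harg2]
      linear_combination
        (-(c j * c k) / 2) * Real.cos_add ((r : ℝ) * lam j * h - α j) ((r : ℝ) * lam k * h - α k)
        + (-(c j * c k) / 2) * Real.cos_sub ((r : ℝ) * lam j * h - α j) ((r : ℝ) * lam k * h - α k)
  have expand : ∀ r : ℕ, σ2 r = K + h * ∑ j, ∑ k, c j * c k * W j k r := by
    intro r
    rw [hσ2 r, sq, Finset.sum_mul_sum]
    have : ∀ j : Fin d, ∑ k, (c j * Real.cos ((r : ℝ) * lam j * h - α j))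
        * (c k * Real.cos ((r : ℝ) * lam k * h - α k))
        = (∑ k, c j * c k * W j k r) + (c j) ^ 2 / 2 := by
      intro j
      rw [Finset.sum_congr rfl fun k _ => term j k r, Finset.sum_add_distrib]
      congr 1
      simp [Finset.sum_ite_eq]
    rw [Finset.sum_congr rfl fun j _ => this j, Finset.sum_add_distrib, mul_add, add_comm]
    congr 1
    rw [hK, ← Finset.sum_div]
    ring
  -- bounds on partial sums of W
  set B : Fin d → Fin d → ℝ := fun j k =>
    1 / |Real.sin ((lam j + lam k) * h / 2)| / 2 +
    1 / |Real.sin ((lam j - lam k) * h / 2)| / 2 with hB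
  have hBnn : ∀ j k, 0 ≤ B j k := by intro j k; simp only [hB]; positivity
  have hWsum : ∀ (j k : Fin d) (n : ℕ), |∑ r ∈ Finset.range n, W j k r| ≤ B j k := by
    intro j k n
    by_cases hjk : j = k
    · simp only [hW, if_pos hjk, add_zero, ← Finset.sum_div, abs_div, abs_two]
      have h1 := abs_sum_cos_le ((lam j + lam k) * h) (-(α j + α k)) (hsin_sum j k) n
      have h2 : (0:ℝ) ≤ 1 / |Real.sin ((lam j - lam k) * h / 2)| / 2 := by positivity
      simp only [hB]
      rw [div_le_iff₀ (by norm_num : (0:ℝ) < 2)] at *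
      nlinarith
    · simp only [hW, if_neg hjk, Finset.sum_add_distrib, ← Finset.sum_div]
      have h1 := abs_sum_cos_le ((lam j + lam k) * h) (-(α j + α k)) (hsin_sum j k) n
      have h2 := abs_sum_cos_le ((lam j - lam k) * h) (-(α j - α k)) (hsin_diff j k hjk) n
      simp only [hB]
      calc |(∑ r ∈ Finset.range n, Real.cos ((r:ℝ) * ((lam j + lam k) * h) + (-(α j + α k)))) / 2
            + (∑ r ∈ Finset.range n, Real.cos ((r:ℝ) * ((lam j - lam k) * h) + (-(α j - α k)))) / 2|
          ≤ |(∑ r ∈ Finset.range n, Real.cos ((r:ℝ) * ((lam j + lam k) * h) + (-(α j + α k)))) / 2|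
            + |(∑ r ∈ Finset.range n, Real.cos ((r:ℝ) * ((lam j - lam k) * h) + (-(α j - α k)))) / 2| :=
            abs_add_le _ _
        _ ≤ 1 / |Real.sin ((lam j + lam k) * h / 2)| / 2
            + 1 / |Real.sin ((lam j - lam k) * h / 2)| / 2 := by
            rw [abs_div, abs_div, abs_two]
            exact add_le_add (by linarith [h1] ) (by linarith [h2])
  -- closed form for s2
  have hS : ∀ n : ℕ, s2 n = ((n : ℝ) + 1) * K
      + h * ∑ j, ∑ k, c j * c k * ∑ r ∈ Finset.range (n + 1), W j k r := by
    intro n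
    rw [hs2, Finset.sum_congr rfl fun r _ => expand r, Finset.sum_add_distrib,
      Finset.sum_const, Finset.card_range, nsmul_eq_mul, ← Finset.mul_sum]
    congr 1
    · push_cast; ring
    congr 1
    rw [Finset.sum_comm]
    refine Finset.sum_congr rfl fun j _ => ?_
    rw [Finset.sum_comm]
    refine Finset.sum_congr rfl fun k _ => ?_
    rw [← Finset.mul_sum]
  -- uniform bound
  set Cb : ℝ := |K| + h * ∑ j, ∑ k, |c j * c k| * B j k with hCb
  have claim1 : ∀ n : ℕ, |s2 n - (n : ℝ) * (h / 2) * ∑ k, (c k) ^ 2| ≤ Cb := by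
    intro n
    have e : s2 n - (n : ℝ) * (h / 2) * ∑ k, (c k) ^ 2
        = K + h * ∑ j, ∑ k, c j * c k * ∑ r ∈ Finset.range (n + 1), W j k r := by
      rw [hS n, hK]; ring
    rw [e]
    have hb : |∑ j, ∑ k, c j * c k * ∑ r ∈ Finset.range (n + 1), W j k r|
        ≤ ∑ j, ∑ k, |c j * c k| * B j k := by
      calc |∑ j, ∑ k, c j * c k * ∑ r ∈ Finset.range (n + 1), W j k r|
          ≤ ∑ j, |∑ k, c j * c k * ∑ r ∈ Finset.range (n + 1), W j k r| :=
            Finset.abs_sum_le_sum_abs _ _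
        _ ≤ ∑ j, ∑ k, |c j * c k * ∑ r ∈ Finset.range (n + 1), W j k r| :=
            Finset.sum_le_sum fun j _ => Finset.abs_sum_le_sum_abs _ _
        _ ≤ ∑ j, ∑ k, |c j * c k| * B j k := by
            refine Finset.sum_le_sum fun j _ => Finset.sum_le_sum fun k _ => ?_
            rw [abs_mul]
            exact mul_le_mul_of_nonneg_left (hWsum j k (n + 1)) (abs_nonneg _)
    calc |K + h * ∑ j, ∑ k, c j * c k * ∑ r ∈ Finset.range (n + 1), W j k r|
        ≤ |K| + |h * ∑ j, ∑ k, c j * c k * ∑ r ∈ Finset.range (n + 1), W j k r| := abs_add_le _ _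
      _ ≤ |K| + h * ∑ j, ∑ k, |c j * c k| * B j k := by
          rw [show |h * ∑ j, ∑ k, c j * c k * ∑ r ∈ Finset.range (n + 1), W j k r|
              = h * |∑ j, ∑ k, c j * c k * ∑ r ∈ Finset.range (n + 1), W j k r| from by
            rw [abs_mul h, abs_of_pos hh0]]
          exact add_le_add_right (mul_le_mul_of_nonneg_left hb hh0.le) _
  refine ⟨⟨Cb, claim1⟩, ?_, hKpos⟩
  -- tendsto
  have h0 : Tendsto (fun n : ℕ => (s2 n - (n : ℝ) * K) / n) atTop (nhds 0) := by
    refine squeeze_zero_norm (fun n => ?_) (tendsto_const_div_atTop_nhds_zero_nat Cb)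
    rcases Nat.eq_zero_or_pos n with rfl | hn
    · simp
    · have hnpos : (0:ℝ) < n := by exact_mod_cast hn
      rw [Real.norm_eq_abs, abs_div, Nat.abs_cast]
      have hKe : s2 n - (n : ℝ) * K = s2 n - (n : ℝ) * (h / 2) * ∑ k, (c k) ^ 2 := by
        rw [hK]; ring
      rw [hKe]
      exact div_le_div_of_nonneg_right (claim1 n) hnpos.le
  have h1 : Tendsto (fun n : ℕ => (s2 n - (n : ℝ) * K) / n + K) atTop (nhds K) := by
    simpa using h0.add (tendsto_const_nhds (x := K))
  apply h1.congr'
  filter_upwards [eventually_ge_atTop 1] with n hn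
  have hnpos : (0:ℝ) < n := by exact_mod_cast hn
  field_simp
  ring
end

section
/- Let S_n = Σ_{r=1}^n σ_{nr} η_r with η_r i.i.d. N(0,1), the array {σ_{nr}} bounded and liminf s_n²/n > 0, and let D_n be a deterministic sequence bounded uniformly in n. Then almost surely D_n + S_n > 0 for infinitely many n and D_n + S_n < 0 for infinitely many n. -/
open MeasureTheory ProbabilityTheory Filter

open Real
open scoped NNReal ENNReal

lemma gaussianPDFReal_mul_gaussianPDFReal (a b : ℝ≥0) (ha : a ≠ 0) (hb : b ≠ 0) (x y : ℝ) :
    gaussianPDFReal 0 a x * gaussianPDFReal 0 b (y - x)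
      = gaussianPDFReal 0 (a + b) y * gaussianPDFReal ((a : ℝ) * y / (a + b)) (a * b / (a + b)) x := by
  have hA : (0:ℝ) < a := lt_of_le_of_ne a.coe_nonneg (by exact_mod_cast (Ne.symm ha))
  have hB : (0:ℝ) < b := lt_of_le_of_ne b.coe_nonneg (by exact_mod_cast (Ne.symm hb))
  have hAB : (0:ℝ) < (a:ℝ) + b := by linarith
  have hab : ((a * b / (a + b) : ℝ≥0) : ℝ) = (a : ℝ) * b / ((a:ℝ) + b) := by
    push_cast [NNReal.coe_div]
    ring
  have hABc : (((a + b : ℝ≥0)) : ℝ) = (a:ℝ) + b := by push_cast; ring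
  simp only [gaussianPDFReal, sub_zero, hab, hABc]
  have hpi : (0:ℝ) < 2 * π := by positivity
  -- prefactor equality
  have h1 : (√(2 * π * a))⁻¹ * (√(2 * π * b))⁻¹
      = (√(2 * π * ((a:ℝ) + b)))⁻¹ * (√(2 * π * ((a:ℝ) * b / ((a:ℝ) + b))))⁻¹ := by
    rw [← mul_inv, ← mul_inv, ← Real.sqrt_mul (by positivity), ← Real.sqrt_mul (by positivity)]
    congr 1
    congr 1
    field_simp
  have h2 : rexp (-x ^ 2 / (2 * a)) * rexp (-(y - x) ^ 2 / (2 * b))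
      = rexp (-y ^ 2 / (2 * ((a:ℝ) + b)))
        * rexp (-(x - (a:ℝ) * y / ((a:ℝ) + b)) ^ 2 / (2 * ((a:ℝ) * b / ((a:ℝ) + b)))) := by
    rw [← Real.exp_add, ← Real.exp_add]
    congr 1
    field_simp
    ring
  calc (√(2 * π * a))⁻¹ * rexp (-x ^ 2 / (2 * a)) * ((√(2 * π * b))⁻¹ * rexp (-(y - x) ^ 2 / (2 * b)))
      = ((√(2 * π * a))⁻¹ * (√(2 * π * b))⁻¹) * (rexp (-x ^ 2 / (2 * a)) * rexp (-(y - x) ^ 2 / (2 * b))) := by ring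
    _ = _ := by rw [h1, h2]; ring

lemma lintegral_gaussianPDF_mul (a b : ℝ≥0) (ha : a ≠ 0) (hb : b ≠ 0) (y : ℝ) :
    ∫⁻ x, gaussianPDF 0 a x * gaussianPDF 0 b (y - x) = gaussianPDF 0 (a + b) y := by
  have hm : (a * b / (a + b) : ℝ≥0) ≠ 0 := by
    positivity
  have key : ∀ x, gaussianPDF 0 a x * gaussianPDF 0 b (y - x)
      = ENNReal.ofReal (gaussianPDFReal 0 (a + b) y
          * gaussianPDFReal ((a : ℝ) * y / (a + b)) (a * b / (a + b)) x) := by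
    intro x
    rw [gaussianPDF, gaussianPDF, ← ENNReal.ofReal_mul (gaussianPDFReal_nonneg _ _ _),
      gaussianPDFReal_mul_gaussianPDFReal a b ha hb x y]
  simp_rw [key]
  rw [← ofReal_integral_eq_lintegral_ofReal]
  · rw [integral_const_mul, integral_gaussianPDFReal_eq_one _ hm, mul_one, gaussianPDF]
  · exact (integrable_gaussianPDFReal _ _).const_mul _
  · exact ae_of_all _ fun x => mul_nonneg (gaussianPDFReal_nonneg _ _ _) (gaussianPDFReal_nonneg _ _ _)

lemma gaussianPDF_shift (x : ℝ) (b : ℝ≥0) (y : ℝ) :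
    gaussianPDF x b y = gaussianPDF 0 b (y - x) := by
  rw [gaussianPDF, gaussianPDF, gaussianPDFReal_sub, zero_add]

lemma gaussianReal_conv_gaussianReal (a b : ℝ≥0) :
    Measure.conv (gaussianReal 0 a) (gaussianReal 0 b) = gaussianReal 0 (a + b) := by
  rcases eq_or_ne a 0 with rfl | ha
  · rw [gaussianReal_zero_var, zero_add]
    exact Measure.dirac_zero_conv _
  rcases eq_or_ne b 0 with rfl | hb
  · rw [gaussianReal_zero_var, add_zero]
    exact Measure.conv_dirac_zero _
  have hab : a + b ≠ 0 := by simp [ha]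
  have hmeas2 : Measurable fun p : ℝ × ℝ => gaussianPDF 0 b (p.2 - p.1) :=
    ((measurable_gaussianPDFReal 0 b).comp (measurable_snd.sub measurable_fst)).ennreal_ofReal
  ext s hs
  rw [Measure.conv, Measure.map_apply measurable_add hs, Measure.prod_apply (measurable_add hs)]
  have h1 : ∀ x : ℝ, gaussianReal 0 b (Prod.mk x ⁻¹' ((fun p : ℝ × ℝ => p.1 + p.2) ⁻¹' s))
      = ∫⁻ y in s, gaussianPDF 0 b (y - x) := by
    intro x
    have h2 : (Prod.mk x ⁻¹' ((fun p : ℝ × ℝ => p.1 + p.2) ⁻¹' s)) = (fun y => x + y) ⁻¹' s := rfl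
    rw [h2, ← Measure.map_apply (measurable_const_add x) hs, gaussianReal_map_const_add,
      zero_add, gaussianReal_apply _ hb]
    exact lintegral_congr fun y => (gaussianPDF_shift x b y)
  simp_rw [h1]
  have hinner : Measurable fun x => ∫⁻ y in s, gaussianPDF 0 b (y - x) := by
    have : ∀ x, ∫⁻ y in s, gaussianPDF 0 b (y - x)
        = ∫⁻ y, (Set.univ ×ˢ s).indicator (fun p : ℝ × ℝ => gaussianPDF 0 b (p.2 - p.1)) (x, y) := by
      intro x
      rw [← lintegral_indicator hs]
      refine lintegral_congr fun y => ?_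
      by_cases hy : y ∈ s <;> simp [Set.indicator, hy]
    simp_rw [this]
    exact Measurable.lintegral_prod_right' (hmeas2.indicator (MeasurableSet.univ.prod hs))
  rw [gaussianReal_of_var_ne_zero _ ha,
    lintegral_withDensity_eq_lintegral_mul _ (measurable_gaussianPDF _ _) hinner]
  have h3 : ∀ x, gaussianPDF 0 a x * ∫⁻ y in s, gaussianPDF 0 b (y - x)
      = ∫⁻ y in s, gaussianPDF 0 a x * gaussianPDF 0 b (y - x) := fun x =>
    (lintegral_const_mul _ ((measurable_gaussianPDFReal 0 b).comp
      (measurable_id.sub_const x)).ennreal_ofReal).symm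

  simp only [Pi.mul_apply]
  simp_rw [h3]
  rw [lintegral_lintegral_swap]
  · rw [gaussianReal_apply _ hab]
    refine setLIntegral_congr_fun hs (fun y _ => ?_)
    exact lintegral_gaussianPDF_mul a b ha hb y
  · exact (((measurable_gaussianPDF 0 a).comp measurable_fst).mul hmeas2).aemeasurable

lemma indepFun_map_add_conv {Ω : Type*} [MeasurableSpace Ω] {μ : Measure Ω}
    [IsProbabilityMeasure μ] {f g : Ω → ℝ} (h : IndepFun f g μ)
    (hf : AEMeasurable f μ) (hg : AEMeasurable g μ) :
    Measure.map (fun ω => f ω + g ω) μ = Measure.conv (Measure.map f μ) (Measure.map g μ) := by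
  rw [Measure.conv, ← (indepFun_iff_map_prod_eq_prod_map_map hf hg).mp h]
  rw [AEMeasurable.map_map_of_aemeasurable (f := fun ω => (f ω, g ω))
    (g := fun p : ℝ × ℝ => p.1 + p.2) measurable_add.aemeasurable (hf.prodMk hg)]
  rfl

lemma map_sum_gaussian {Ω : Type*} [MeasurableSpace Ω] {μ : Measure Ω}
    [IsProbabilityMeasure μ] (η : ℕ → Ω → ℝ) (hη : ∀ r, Measurable (η r))
    (hind : iIndepFun η μ)
    (hgauss : ∀ r, Measure.map (η r) μ = gaussianReal 0 1)
    (c : ℕ → ℝ) (t : Finset ℕ) :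
    Measure.map (fun ω => ∑ r ∈ t, c r * η r ω) μ
      = gaussianReal 0 (∑ r ∈ t, (⟨(c r) ^ 2, sq_nonneg _⟩ : ℝ≥0)) := by
  classical
  induction t using Finset.cons_induction with
  | empty =>
      simp only [Finset.sum_empty]
      rw [Measure.map_const, measure_univ, one_smul, ← gaussianReal_zero_var 0]
      rfl
  | cons i t hi ih =>
      have hX : iIndepFun (fun r ω => c r * η r ω) μ :=
        hind.comp (fun r x => c r * x) (fun r => measurable_id.const_mul _)
      have hXm : ∀ r, Measurable (fun ω => c r * η r ω) := fun r => (hη r).const_mul _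
      have hIndep : IndepFun (fun ω => c i * η i ω) (fun ω => ∑ r ∈ t, c r * η r ω) μ := by
        have := (hX.indepFun_finsetSum_of_notMem hXm hi).symm
        have he : (∑ j ∈ t, fun ω => c j * η j ω) = fun ω => ∑ r ∈ t, c r * η r ω := by
          funext ω; simp [Finset.sum_apply]
        rwa [he] at this
      have hmapi : Measure.map (fun ω => c i * η i ω) μ = gaussianReal 0 (⟨(c i) ^ 2, sq_nonneg _⟩ : ℝ≥0) := by
        have : (fun ω => c i * η i ω) = (fun x => c i * x) ∘ η i := rfl
        rw [this, ← Measure.map_map (measurable_const_mul (c i)) (hη i), hgauss i,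
          gaussianReal_map_const_mul]
        norm_num
        rfl
      have hsum : (fun ω => ∑ r ∈ Finset.cons i t hi, c r * η r ω)
          = fun ω => c i * η i ω + ∑ r ∈ t, c r * η r ω := by
        funext ω; rw [Finset.sum_cons]
      rw [hsum, indepFun_map_add_conv hIndep (hXm i).aemeasurable
          (by exact (Finset.measurable_sum t fun r _ => hXm r).aemeasurable),
        hmapi, ih]
      exact (_root_.gaussianReal_conv_gaussianReal _ _).trans
        (congrArg (gaussianReal 0) (Finset.sum_cons (f := fun r => (⟨(c r) ^ 2, sq_nonneg _⟩ : ℝ≥0)) hi).symm)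

lemma gaussianReal_Ioi_one_pos : 0 < gaussianReal 0 1 (Set.Ioi 1) := by
  rw [gaussianReal_apply 0 one_ne_zero]
  rw [pos_iff_ne_zero]
  intro h0
  have hmeas : Measurable (gaussianPDF 0 1) := measurable_gaussianPDF 0 1
  have h1 := (lintegral_eq_zero_iff hmeas).mp h0
  have h2 : (volume.restrict (Set.Ioi (1:ℝ))) {x | ¬ gaussianPDF 0 1 x = 0} = 0 :=
    ae_iff.mp h1
  have h3 : {x : ℝ | ¬ gaussianPDF 0 1 x = 0} = Set.univ := by
    ext x
    simp [(gaussianPDF_pos 0 one_ne_zero x).ne']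
  rw [h3, Measure.restrict_apply MeasurableSet.univ, Set.univ_inter, Real.volume_Ioi] at h2
  exact ENNReal.top_ne_zero h2

lemma gaussianReal_Ioi_ge (v : ℝ≥0) (K : ℝ) (hK : 0 ≤ K) (hv : K ^ 2 ≤ (v : ℝ)) (hv1 : 1 ≤ (v : ℝ)) :
    gaussianReal 0 1 (Set.Ioi 1) ≤ gaussianReal 0 v (Set.Ioi K) := by
  have hvpos : (0:ℝ) < v := lt_of_lt_of_le one_pos hv1
  set c : ℝ := Real.sqrt v with hc
  have hcpos : 0 < c := Real.sqrt_pos.mpr hvpos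
  have hv' : (⟨c ^ 2, sq_nonneg _⟩ : ℝ≥0) * 1 = v := by
    ext
    simp [hc, Real.sq_sqrt hvpos.le]
  have hmap : gaussianReal 0 v = Measure.map (fun x => c * x) (gaussianReal 0 1) := by
    rw [show (fun x : ℝ => c * x) = (c * ·) from rfl, gaussianReal_map_const_mul, mul_zero]
    exact congrArg (gaussianReal 0) hv'.symm
  rw [hmap, Measure.map_apply (measurable_const_mul c) measurableSet_Ioi]
  have hpre : (fun x : ℝ => c * x) ⁻¹' Set.Ioi K = Set.Ioi (K / c) := by
    ext x
    simp only [Set.mem_preimage, Set.mem_Ioi]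
    rw [mul_comm]
    exact (div_lt_iff₀ hcpos).symm
  rw [hpre]
  apply measure_mono
  apply Set.Ioi_subset_Ioi
  rw [div_le_one hcpos, hc]
  calc K = Real.sqrt (K ^ 2) := (Real.sqrt_sq hK).symm
  _ ≤ Real.sqrt v := Real.sqrt_le_sqrt hv

lemma freq_transfer {u v : ℕ → ℝ} {B : ℝ} {N : ℕ}
    (h : ∀ n, N ≤ n → |u n - v n| ≤ B)
    (hu : ∀ K : ℕ, ∃ᶠ n in atTop, (K : ℝ) < u n) :
    ∀ K : ℕ, ∃ᶠ n in atTop, (K : ℝ) < v n := by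
  intro K
  obtain ⟨K', hK'⟩ := exists_nat_ge ((K : ℝ) + B)
  have h2 := (hu K').and_eventually (eventually_ge_atTop N)
  refine h2.mono fun n hn => ?_
  obtain ⟨h3, h4⟩ := hn
  have h5 := (abs_le.mp (h n h4)).2
  linarith

lemma gauss_freq_unbounded {Ω : Type*} [MeasurableSpace Ω] (μ : Measure Ω) [IsProbabilityMeasure μ]
    (η : ℕ → Ω → ℝ) (hη : ∀ r, Measurable (η r))
    (hind : iIndepFun η μ)
    (hgauss : ∀ r, Measure.map (η r) μ = gaussianReal 0 1)
    (σ : ℕ → ℕ → ℝ) (M : ℝ) (hbdd : ∀ n r, |σ n r| ≤ M)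
    (s2 : ℕ → ℝ) (hs2 : ∀ n, s2 n = ∑ r ∈ Finset.Icc 1 n, (σ n r) ^ 2)
    (hliminf : 0 < Filter.atTop.liminf fun n => s2 n / n) :
    ∀ᵐ ω ∂μ, ∀ K : ℕ, {n : ℕ | (K:ℝ) < ∑ r ∈ Finset.Icc 1 n, σ n r * η r ω}.Infinite := by
  classical
  set S : ℕ → Ω → ℝ := fun n ω => ∑ r ∈ Finset.Icc 1 n, σ n r * η r ω with hSdef
  have hSm : ∀ n, Measurable (S n) :=
    fun n => Finset.measurable_sum _ fun r _ => (hη r).const_mul _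
  -- the event
  set E : Set Ω := ⋂ K : ℕ, ⋂ N : ℕ, ⋃ n : ℕ, ⋃ (_ : N ≤ n), {ω | (K:ℝ) < S n ω} with hEdef
  have hmemE : ∀ ω, ω ∈ E ↔ ∀ K : ℕ, ∃ᶠ n in atTop, (K:ℝ) < S n ω := by
    intro ω
    simp only [hEdef, Set.mem_iInter, Set.mem_iUnion, Set.mem_setOf_eq, frequently_atTop,
      exists_prop]
  have hEmeas : MeasurableSet E := by
    refine MeasurableSet.iInter fun K => MeasurableSet.iInter fun N => ?_
    exact MeasurableSet.iUnion fun n => MeasurableSet.iUnion fun _ =>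
      measurableSet_lt measurable_const (hSm n)
  -- nonnegativity of M
  have hM0 : 0 ≤ M := le_trans (abs_nonneg _) (hbdd 0 0)
  -- positive lower bound on tail probabilities
  set δ : ℝ≥0∞ := gaussianReal 0 1 (Set.Ioi 1) with hδdef
  have hδpos : 0 < δ := gaussianReal_Ioi_one_pos
  have hs2nonneg : ∀ n, 0 ≤ s2 n := fun n => by
    rw [hs2]; exact Finset.sum_nonneg fun r _ => sq_nonneg _
  have hs2big : ∀ a : ℝ, ∀ᶠ n in atTop, a ≤ s2 n := by
    intro a
    set L := Filter.atTop.liminf fun n => s2 n / n with hL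
    have hbound : IsBoundedUnder (· ≥ ·) atTop fun n : ℕ => s2 n / n :=
      isBoundedUnder_of ⟨0, fun n => div_nonneg (hs2nonneg n) (Nat.cast_nonneg n)⟩
    have hev : ∀ᶠ n in atTop, L / 2 < s2 n / n :=
      eventually_lt_of_lt_liminf (by linarith [hliminf]) hbound
    have htend : Tendsto (fun n : ℕ => L / 2 * n) atTop atTop :=
      Tendsto.const_mul_atTop (by linarith [hliminf]) tendsto_natCast_atTop_atTop
    filter_upwards [hev, htend.eventually_ge_atTop a, eventually_ge_atTop 1] with n h1 h2 h3
    have hnpos : (0:ℝ) < n := by exact_mod_cast h3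
    have h4 : L / 2 * n < s2 n / n * n := mul_lt_mul_of_pos_right h1 hnpos
    rw [div_mul_cancel₀ _ hnpos.ne'] at h4
    linarith
  -- variance as NNReal
  set v : ℕ → ℝ≥0 := fun n => ∑ r ∈ Finset.Icc 1 n, (⟨(σ n r) ^ 2, sq_nonneg _⟩ : ℝ≥0) with hvdef
  have hvco : ∀ n, ((v n : ℝ≥0) : ℝ) = s2 n := by
    intro n
    rw [hs2, hvdef]
    push_cast
    exact NNReal.coe_sum ..
  have hmap : ∀ n, Measure.map (S n) μ = gaussianReal 0 (v n) := fun n =>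
    map_sum_gaussian η hη hind hgauss (σ n) (Finset.Icc 1 n)
  have hprob : ∀ K : ℕ, ∀ᶠ n in atTop, δ ≤ μ {ω | (K:ℝ) < S n ω} := by
    intro K
    filter_upwards [hs2big (max ((K:ℝ)^2) 1)] with n hn
    have h1 : ((K:ℝ))^2 ≤ ((v n : ℝ≥0) : ℝ) := by rw [hvco]; exact le_trans (le_max_left _ _) hn
    have h2 : 1 ≤ ((v n : ℝ≥0) : ℝ) := by rw [hvco]; exact le_trans (le_max_right _ _) hn
    have h3 : {ω | (K:ℝ) < S n ω} = S n ⁻¹' Set.Ioi (K:ℝ) := rfl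
    rw [h3, ← Measure.map_apply (hSm n) measurableSet_Ioi, hmap n]
    exact gaussianReal_Ioi_ge (v n) _ (Nat.cast_nonneg K) h1 h2
  -- lower bound for the measure of E
  have hEδ : δ ≤ μ E := by
    set C : ℕ → Set Ω := fun K => ⋂ N : ℕ, ⋃ n : ℕ, ⋃ (_ : N ≤ n), {ω | (K:ℝ) < S n ω} with hCdef
    have hCm : ∀ K, MeasurableSet (C K) := fun K =>
      MeasurableSet.iInter fun N => MeasurableSet.iUnion fun n => MeasurableSet.iUnion fun _ =>
        measurableSet_lt measurable_const (hSm n)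
    have hCK : ∀ K, δ ≤ μ (C K) := by
      intro K
      set B : ℕ → Set Ω := fun N => ⋃ n : ℕ, ⋃ (_ : N ≤ n), {ω | (K:ℝ) < S n ω} with hBdef
      have hBm : ∀ N, MeasurableSet (B N) := fun N =>
        MeasurableSet.iUnion fun n => MeasurableSet.iUnion fun _ =>
          measurableSet_lt measurable_const (hSm n)
      have hBanti : Antitone B := by
        intro N N' hNN'
        exact Set.iUnion₂_mono' fun n hn => ⟨n, le_trans hNN' hn, subset_rfl⟩
      rw [show C K = ⋂ N, B N from rfl,
        hBanti.measure_iInter (fun N => (hBm N).nullMeasurableSet)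
          ⟨0, measure_ne_top μ _⟩]
      refine le_iInf fun N => ?_
      obtain ⟨n, hn1, hn2⟩ := ((hprob K).and (eventually_ge_atTop N)).exists
      refine le_trans hn1 (measure_mono ?_)
      exact Set.subset_iUnion₂ (s := fun (n : ℕ) (_ : N ≤ n) => {ω | (K:ℝ) < S n ω}) n hn2
    have hCanti : Antitone C := by
      intro K K' hKK'
      refine Set.iInter_mono fun N => Set.iUnion₂_mono fun n _ => ?_
      intro ω hω
      simp only [Set.mem_setOf_eq] at hω ⊢
      exact lt_of_le_of_lt (Nat.cast_le.mpr hKK') hω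
    rw [show E = ⋂ K, C K from rfl,
      hCanti.measure_iInter (fun K => (hCm K).nullMeasurableSet) ⟨0, measure_ne_top μ _⟩]
    exact le_iInf fun K => hCK K
  -- Kolmogorov 0-1 law
  have h01 : μ E = 0 ∨ μ E = 1 := by
    refine measure_zero_or_one_of_measurableSet_limsup_atTop
      (s := fun r => MeasurableSpace.comap (η r) inferInstance)
      (fun r => (hη r).comap_le) hind ?_
    rw [limsup_eq_iInf_iSup_of_nat]
    refine MeasurableSpace.measurableSet_iInf.mpr fun N => ?_
    set m' : MeasurableSpace Ω := ⨆ i, ⨆ (_ : i ≥ N), MeasurableSpace.comap (η i) inferInstance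
      with hm'def
    show MeasurableSet[m'] E
    have hηm' : ∀ r, N ≤ r → Measurable[m'] (η r) := by
      intro r hr
      have h1 : Measurable[MeasurableSpace.comap (η r) inferInstance] (η r) :=
        measurable_iff_comap_le.mpr le_rfl
      exact h1.mono (le_iSup₂ (f := fun i (_ : i ≥ N) =>
        MeasurableSpace.comap (η i) inferInstance) r hr) le_rfl
    set T : ℕ → Ω → ℝ := fun n ω => ∑ r ∈ Finset.Ioc N n, σ n r * η r ω with hTdef
    have hTm : ∀ n, Measurable[m'] (T n) := by
      intro n
      refine Finset.measurable_sum _ fun r hr => ?_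
      exact (hηm' r (le_of_lt (Finset.mem_Ioc.mp hr).1)).const_mul _
    have hdiff : ∀ ω n, N ≤ n → |S n ω - T n ω| ≤ M * ∑ r ∈ Finset.Ioc 0 N, |η r ω| := by
      intro ω n hn
      have hsplit : S n ω = (∑ r ∈ Finset.Ioc 0 N, σ n r * η r ω) + T n ω := by
        show (∑ r ∈ Finset.Icc 1 n, σ n r * η r ω) = _
        have hIcc : Finset.Icc 1 n = Finset.Ioc 0 n := by
          rw [← Finset.Icc_add_one_left_eq_Ioc, zero_add]
        rw [hIcc]
        exact (Finset.sum_Ioc_consecutive _ (Nat.zero_le N) hn).symm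
      rw [hsplit, add_sub_cancel_right]
      calc |∑ r ∈ Finset.Ioc 0 N, σ n r * η r ω| ≤ ∑ r ∈ Finset.Ioc 0 N, |σ n r * η r ω| :=
            Finset.abs_sum_le_sum_abs _ _
        _ ≤ ∑ r ∈ Finset.Ioc 0 N, M * |η r ω| := by
            refine Finset.sum_le_sum fun r _ => ?_
            rw [abs_mul]
            exact mul_le_mul_of_nonneg_right (hbdd n r) (abs_nonneg _)
        _ = M * ∑ r ∈ Finset.Ioc 0 N, |η r ω| := by rw [Finset.mul_sum]
    set E' : Set Ω := ⋂ K : ℕ, ⋂ N' : ℕ, ⋃ n : ℕ, ⋃ (_ : N' ≤ n), {ω | (K:ℝ) < T n ω} with hE'def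
    have hE'meas : MeasurableSet[m'] E' := by
      refine MeasurableSet.iInter fun K => MeasurableSet.iInter fun N' => ?_
      exact MeasurableSet.iUnion fun n => MeasurableSet.iUnion fun _ =>
        measurableSet_lt measurable_const (hTm n)
    have hEE' : E = E' := by
      ext ω
      have hmemE' : ω ∈ E' ↔ ∀ K : ℕ, ∃ᶠ n in atTop, (K:ℝ) < T n ω := by
        simp only [hE'def, Set.mem_iInter, Set.mem_iUnion, Set.mem_setOf_eq, frequently_atTop,
          exists_prop]
      rw [hmemE ω, hmemE']
      constructor
      · exact freq_transfer (B := M * ∑ r ∈ Finset.Ioc 0 N, |η r ω|) (N := N)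
          (fun n hn => hdiff ω n hn)
      · refine freq_transfer (B := M * ∑ r ∈ Finset.Ioc 0 N, |η r ω|) (N := N)
          (fun n hn => ?_)
        rw [abs_sub_comm]
        exact hdiff ω n hn
    rw [hEE']
    exact hE'meas
  have hE1 : μ E = 1 := by
    rcases h01 with h | h
    · exfalso; rw [h] at hEδ; exact hδpos.not_ge hEδ
    · exact h
  have hae : ∀ᵐ ω ∂μ, ω ∈ E := by
    rw [ae_iff]
    have : {ω | ¬ ω ∈ E} = Eᶜ := rfl
    rw [this, measure_compl hEmeas (measure_ne_top μ E), hE1, measure_univ, tsub_self]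
  filter_upwards [hae] with ω hω K
  rw [← Nat.frequently_atTop_iff_infinite]
  exact (hmemE ω).mp hω K

lemma iIndepFun_of_ae_eq {Ω : Type*} [MeasurableSpace Ω] {μ : Measure Ω}
    [IsProbabilityMeasure μ] {f g : ℕ → Ω → ℝ} (hfg : ∀ i, f i =ᵐ[μ] g i)
    (h : iIndepFun f μ) :
    iIndepFun g μ := by
  rw [iIndepFun_iff_measure_inter_preimage_eq_mul] at h ⊢
  intro S sets hsets
  have hall : ∀ᵐ ω ∂μ, ∀ i, f i ω = g i ω := ae_all_iff.mpr hfg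
  have h1 : (⋂ i ∈ S, g i ⁻¹' sets i) =ᵐ[μ] (⋂ i ∈ S, f i ⁻¹' sets i) := by
    refine hall.mono fun ω hω => ?_
    have hiff : (ω ∈ ⋂ i ∈ S, g i ⁻¹' sets i) ↔ (ω ∈ ⋂ i ∈ S, f i ⁻¹' sets i) := by
      simp only [Set.mem_iInter, Set.mem_preimage]
      exact forall₂_congr fun i _ => by rw [hω i]
    exact eq_iff_iff.mpr hiff
  have h2 : ∀ i ∈ S, μ (g i ⁻¹' sets i) = μ (f i ⁻¹' sets i) := by
    intro i _
    refine measure_congr (hall.mono fun ω hω => ?_)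
    have hiff : (ω ∈ g i ⁻¹' sets i) ↔ (ω ∈ f i ⁻¹' sets i) := by
      simp only [Set.mem_preimage]
      rw [hω i]
    exact eq_iff_iff.mpr hiff
  rw [measure_congr h1, h S hsets]
  exact (Finset.prod_congr rfl h2).symm

/-- If `S_n = Σ_{r=1}^n σ_{nr} η_r` with `η_r` i.i.d. standard normal, the array `{σ_{nr}}`
bounded, `liminf s_n²/n > 0`, and `D_n` is a uniformly bounded deterministic sequence, then
almost surely `D_n + S_n > 0` infinitely often and `D_n + S_n < 0` infinitely often. -/
theorem bounded_shift_sign_changes {Ω : Type*} [MeasurableSpace Ω]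
    (μ : Measure Ω) [IsProbabilityMeasure μ]
    (η : ℕ → Ω → ℝ)
    (hind : iIndepFun η μ)
    (hgauss : ∀ r, Measure.map (η r) μ = gaussianReal 0 1)
    (σ : ℕ → ℕ → ℝ) (M : ℝ) (hbdd : ∀ n r, |σ n r| ≤ M)
    (S : ℕ → Ω → ℝ) (hS : ∀ n ω, S n ω = ∑ r ∈ Finset.Icc 1 n, σ n r * η r ω)
    (s2 : ℕ → ℝ) (hs2 : ∀ n, s2 n = ∑ r ∈ Finset.Icc 1 n, (σ n r) ^ 2)
    (hliminf : 0 < Filter.atTop.liminf fun n => s2 n / n)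
    (D : ℕ → ℝ) (C : ℝ) (hD : ∀ n, |D n| ≤ C) :
    ∀ᵐ ω ∂μ, {n : ℕ | 0 < D n + S n ω}.Infinite ∧ {n : ℕ | D n + S n ω < 0}.Infinite := by
  have hηae : ∀ r, AEMeasurable (η r) μ := fun r =>
    aemeasurable_of_map_neZero (by rw [hgauss r]; infer_instance)
  set η' : ℕ → Ω → ℝ := fun r => (hηae r).mk (η r) with hη'def
  have hη'm : ∀ r, Measurable (η' r) := fun r => (hηae r).measurable_mk
  have hη'eq : ∀ r, η r =ᵐ[μ] η' r := fun r => (hηae r).ae_eq_mk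
  have hind' : iIndepFun η' μ := iIndepFun_of_ae_eq hη'eq hind
  have hgauss' : ∀ r, Measure.map (η' r) μ = gaussianReal 0 1 := fun r => by
    rw [← Measure.map_congr (hη'eq r), hgauss r]
  have A1 := gauss_freq_unbounded μ η' hη'm hind' hgauss' σ M hbdd s2 hs2 hliminf
  have A2 := gauss_freq_unbounded μ η' hη'm hind' hgauss' (fun n r => -σ n r) M
      (fun n r => by rw [abs_neg]; exact hbdd n r) s2
      (fun n => by
        rw [hs2 n]
        exact Finset.sum_congr rfl fun r _ => (neg_sq (σ n r)).symm) hliminf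
  have hall : ∀ᵐ ω ∂μ, ∀ r, η r ω = η' r ω := ae_all_iff.mpr hη'eq
  obtain ⟨K, hK⟩ := exists_nat_ge C
  filter_upwards [A1, A2, hall] with ω h1 h2 heq
  have hSeq : ∀ n, S n ω = ∑ r ∈ Finset.Icc 1 n, σ n r * η' r ω := fun n => by
    rw [hS]
    exact Finset.sum_congr rfl fun r _ => by rw [heq r]
  constructor
  · refine Set.Infinite.mono ?_ (h1 K)
    intro n hn
    simp only [Set.mem_setOf_eq] at hn ⊢
    have hD1 := (abs_le.mp (hD n)).1
    have hSn := hSeq n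
    linarith
  · refine Set.Infinite.mono ?_ (h2 K)
    intro n hn
    simp only [Set.mem_setOf_eq] at hn ⊢
    have hneg : ∑ r ∈ Finset.Icc 1 n, -σ n r * η' r ω
        = -(∑ r ∈ Finset.Icc 1 n, σ n r * η' r ω) := by
      rw [← Finset.sum_neg_distrib]
      exact Finset.sum_congr rfl fun r _ => by ring
    rw [hneg] at hn
    have hD2 := (abs_le.mp (hD n)).2
    have hSn := hSeq n
    linarith
end
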